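/- Let B₀ be the closed unit ball in ℝ^d and Ψ(x,t) := t/(log(e+t)+log(e+|x|)). For δ ∈ (0, e^{−e}) let f_δ := δ^{−d} · χ_{{|x| < δ}}. Then there exist constants c, C > 0 depending only on d such that for every δ ∈ (0, e^{−e}): c · log(log(1/δ)) ≤ ∫_{B₀} |f_δ(x)| log⁺ log⁺ |f_δ(x)| dx ≤ C · log(log(1/δ)) and c · log(log(1/δ)) ≤ ∫_{B₀} Ψ(x, M(f_δ)(x)) dx ≤ C · log(log(1/δ)). -/

import Mathlib

open MeasureTheory Metric Real ENNReal NNReal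

/-- `log⁺ u = max (log u) 0`. -/
noncomputable def logPlus (u : ℝ) : ℝ := max (Real.log u) 0

/-- `Ψ(x,t) = t / (log(e+t) + log(e+|x|))`. -/
noncomputable def PsiFun {d : ℕ} (x : EuclideanSpace ℝ (Fin d)) (t : ℝ) : ℝ :=
  t / (Real.log (Real.exp 1 + t) + Real.log (Real.exp 1 + ‖x‖))

/-- The Hardy–Littlewood maximal function. -/
noncomputable def HLMax {d : ℕ} (f : EuclideanSpace ℝ (Fin d) → ℂ)
    (x : EuclideanSpace ℝ (Fin d)) : ℝ≥0∞ :=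
  ⨆ (r : ℝ) (_ : 0 < r),
    (volume (Metric.ball x r))⁻¹ * ∫⁻ y in Metric.ball x r, (‖f y‖₊ : ℝ≥0∞)

/-- `f_δ = δ^{-d} χ_{{|x| < δ}}`. -/
noncomputable def fDelta (d : ℕ) (δ : ℝ) (x : EuclideanSpace ℝ (Fin d)) : ℂ :=
  if ‖x‖ < δ then ((δ : ℂ) ^ d)⁻¹ else 0

section Aux


lemma psi_mono {A t T : ℝ} (hA : 0 ≤ A) (ht : 0 ≤ t) (htT : t ≤ T) :
    t / (Real.log (Real.exp 1 + t) + A) ≤ T / (Real.log (Real.exp 1 + T) + A) := by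
  have hT : 0 ≤ T := ht.trans htT
  have he : 0 < Real.exp 1 := Real.exp_pos 1
  have h1t : (1:ℝ) ≤ Real.log (Real.exp 1 + t) := by
    have h := Real.log_le_log (Real.exp_pos 1) (show Real.exp 1 ≤ Real.exp 1 + t by linarith)
    rwa [Real.log_exp] at h
  have h1T : (1:ℝ) ≤ Real.log (Real.exp 1 + T) := by
    have h := Real.log_le_log (Real.exp_pos 1) (show Real.exp 1 ≤ Real.exp 1 + T by linarith)
    rwa [Real.log_exp] at h
  have hdt : 0 < Real.log (Real.exp 1 + t) + A := by linarith
  have hdT : 0 < Real.log (Real.exp 1 + T) + A := by linarith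
  rw [div_le_div_iff₀ hdt hdT]
  have hsplit : Real.log (Real.exp 1 + T) =
      Real.log (Real.exp 1 + t) + Real.log ((Real.exp 1 + T)/(Real.exp 1 + t)) := by
    rw [Real.log_div (by positivity) (by positivity)]; ring
  have hlog2 : Real.log ((Real.exp 1 + T)/(Real.exp 1 + t)) ≤ (T - t)/(Real.exp 1 + t) := by
    have h := Real.log_le_sub_one_of_pos (x := (Real.exp 1 + T)/(Real.exp 1 + t)) (by positivity)
    have heq : (Real.exp 1 + T)/(Real.exp 1 + t) - 1 = (T - t)/(Real.exp 1 + t) := by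
      field_simp; ring
    linarith [heq ▸ h]
  have h3 : t * ((T - t)/(Real.exp 1 + t)) ≤ T - t := by
    rw [mul_div_assoc', div_le_iff₀ (by positivity)]
    nlinarith
  nlinarith [mul_le_mul_of_nonneg_left hlog2 ht]

lemma sum_inv_ge_log (n : ℕ) :
    Real.log (n+1) ≤ ∑ k ∈ Finset.range n, (1:ℝ)/(k+1) := by
  induction n with
  | zero => simp
  | succ n ih =>
    rw [Finset.sum_range_succ]
    have h : Real.log ((n:ℝ)+1+1) ≤ Real.log ((n:ℝ)+1) + 1/((n:ℝ)+1) := by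
      have h1 : Real.log (((n:ℝ)+1+1)/((n:ℝ)+1)) ≤ ((n:ℝ)+1+1)/((n:ℝ)+1) - 1 :=
        Real.log_le_sub_one_of_pos (by positivity)
      have h2 : Real.log (((n:ℝ)+1+1)/((n:ℝ)+1)) =
          Real.log ((n:ℝ)+1+1) - Real.log ((n:ℝ)+1) :=
        Real.log_div (by positivity) (by positivity)
      have h3 : ((n:ℝ)+1+1)/((n:ℝ)+1) - 1 = 1/((n:ℝ)+1) := by field_simp; ring
      linarith [h3 ▸ h2 ▸ h1]
    push_cast
    linarith

lemma sum_inv_le_log (n : ℕ) (hn : 1 ≤ n) :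
    ∑ k ∈ Finset.range n, (1:ℝ)/(k+1) ≤ 1 + Real.log n := by
  induction n, hn using Nat.le_induction with
  | base => simp
  | succ n hn ih =>
    rw [Finset.sum_range_succ]
    have hn' : (1:ℝ) ≤ (n:ℝ) := by exact_mod_cast hn
    have h : 1/((n:ℝ)+1) ≤ Real.log ((n:ℝ)+1) - Real.log n := by
      have h1 : Real.log ((n:ℝ)/((n:ℝ)+1)) ≤ (n:ℝ)/((n:ℝ)+1) - 1 :=
        Real.log_le_sub_one_of_pos (by positivity)
      have h2 : Real.log ((n:ℝ)/((n:ℝ)+1)) = Real.log n - Real.log ((n:ℝ)+1) :=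
        Real.log_div (by positivity) (by positivity)
      have h3 : (n:ℝ)/((n:ℝ)+1) - 1 = -(1/((n:ℝ)+1)) := by field_simp; ring
      linarith [h3 ▸ h2 ▸ h1]
    push_cast
    linarith


lemma norm_fDelta {d : ℕ} {δ : ℝ} (hδ : 0 < δ) (x : EuclideanSpace ℝ (Fin d)) :
    ‖fDelta d δ x‖ = if ‖x‖ < δ then (δ^d)⁻¹ else 0 := by
  unfold fDelta
  split_ifs with h
  · rw [norm_inv, norm_pow, Complex.norm_real, Real.norm_of_nonneg hδ.le]
  · simp

lemma volume_ball_euc {d : ℕ} (hd : 0 < d) {r : ℝ} (hr : 0 ≤ r) :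
    volume (ball (0 : EuclideanSpace ℝ (Fin d)) r)
      = ENNReal.ofReal (r ^ d) * volume (ball (0 : EuclideanSpace ℝ (Fin d)) 1) := by
  haveI : Nonempty (Fin d) := ⟨⟨0, hd⟩⟩
  rw [Measure.addHaar_ball volume 0 hr, finrank_euclideanSpace_fin]

lemma volume_closedBall_euc {d : ℕ} (hd : 0 < d) {r : ℝ} (hr : 0 ≤ r) :
    volume (closedBall (0 : EuclideanSpace ℝ (Fin d)) r)
      = ENNReal.ofReal (r ^ d) * volume (ball (0 : EuclideanSpace ℝ (Fin d)) 1) := by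
  rw [Measure.addHaar_closedBall volume 0 hr, finrank_euclideanSpace_fin]

lemma partA {d : ℕ} (hd : 0 < d) {δ : ℝ} (hδ : 0 < δ) (hδ1 : δ < 1) :
    (∫⁻ x in closedBall (0 : EuclideanSpace ℝ (Fin d)) 1,
        ENNReal.ofReal (‖fDelta d δ x‖ * logPlus (logPlus ‖fDelta d δ x‖)))
      = ENNReal.ofReal (logPlus (logPlus ((δ^d)⁻¹)))
          * volume (ball (0 : EuclideanSpace ℝ (Fin d)) 1) := by
  have hsub : ball (0 : EuclideanSpace ℝ (Fin d)) δ ⊆ closedBall 0 1 := by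
    intro y hy
    rw [mem_ball] at hy
    rw [mem_closedBall]
    linarith
  have hpt : ∀ x : EuclideanSpace ℝ (Fin d),
      ENNReal.ofReal (‖fDelta d δ x‖ * logPlus (logPlus ‖fDelta d δ x‖))
        = (ball (0 : EuclideanSpace ℝ (Fin d)) δ).indicator
            (fun _ => ENNReal.ofReal ((δ^d)⁻¹ * logPlus (logPlus ((δ^d)⁻¹)))) x := by
    intro x
    rw [norm_fDelta hδ]
    by_cases h : ‖x‖ < δ
    · rw [if_pos h, Set.indicator_of_mem (by simpa [mem_ball, dist_zero_right] using h)]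
    · rw [if_neg h, Set.indicator_of_notMem (by simpa [mem_ball, dist_zero_right] using h)]
      simp
  rw [lintegral_congr hpt, lintegral_indicator measurableSet_ball, setLIntegral_const,
    Measure.restrict_apply measurableSet_ball, Set.inter_eq_left.mpr hsub,
    volume_ball_euc hd hδ.le, ← mul_assoc]
  congr 1
  have hnn : (0:ℝ) ≤ (δ ^ d)⁻¹ * logPlus (logPlus ((δ ^ d)⁻¹)) :=
    mul_nonneg (by positivity) (le_max_right _ _)
  rw [← ENNReal.ofReal_mul hnn]
  congr 1
  field_simp


-- total integral of ‖f‖ is volume of unit ball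
lemma lintegral_fDelta_total {d : ℕ} (hd : 0 < d) {δ : ℝ} (hδ : 0 < δ) :
    (∫⁻ y, (‖fDelta d δ y‖₊ : ℝ≥0∞))
      = volume (ball (0 : EuclideanSpace ℝ (Fin d)) 1) := by
  have hpt : ∀ y : EuclideanSpace ℝ (Fin d), ((‖fDelta d δ y‖₊ : ℝ≥0∞))
      = (ball (0 : EuclideanSpace ℝ (Fin d)) δ).indicator
          (fun _ => ENNReal.ofReal ((δ^d)⁻¹)) y := by
    intro y
    rw [← enorm_eq_nnnorm, ← ofReal_norm, norm_fDelta hδ]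
    by_cases h : ‖y‖ < δ
    · rw [if_pos h, Set.indicator_of_mem (by simpa [mem_ball, dist_zero_right] using h)]
    · rw [if_neg h, Set.indicator_of_notMem (by simpa [mem_ball, dist_zero_right] using h)]
      simp
  rw [lintegral_congr hpt, lintegral_indicator measurableSet_ball, setLIntegral_const,
    volume_ball_euc hd hδ.le, ← mul_assoc, ← ENNReal.ofReal_mul (by positivity),
    inv_mul_cancel₀ (by positivity), ENNReal.ofReal_one, one_mul]

lemma lintegral_fDelta_le {d : ℕ} (hd : 0 < d) {δ : ℝ} (hδ : 0 < δ)
    (s : Set (EuclideanSpace ℝ (Fin d))) :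
    (∫⁻ y in s, (‖fDelta d δ y‖₊ : ℝ≥0∞))
      ≤ volume (ball (0 : EuclideanSpace ℝ (Fin d)) 1) :=
  (setLIntegral_le_lintegral _ _).trans (le_of_eq (lintegral_fDelta_total hd hδ))

lemma lintegral_fDelta_ball {d : ℕ} (hd : 0 < d) {δ : ℝ} (hδ : 0 < δ) :
    (∫⁻ y in ball (0 : EuclideanSpace ℝ (Fin d)) δ, (‖fDelta d δ y‖₊ : ℝ≥0∞))
      = volume (ball (0 : EuclideanSpace ℝ (Fin d)) 1) := by
  have hpt : ∀ y ∈ ball (0 : EuclideanSpace ℝ (Fin d)) δ,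
      ((‖fDelta d δ y‖₊ : ℝ≥0∞)) = ENNReal.ofReal ((δ^d)⁻¹) := by
    intro y hy
    rw [mem_ball, dist_zero_right] at hy
    rw [← enorm_eq_nnnorm, ← ofReal_norm, norm_fDelta hδ, if_pos hy]
  rw [setLIntegral_congr_fun measurableSet_ball (fun y hy => hpt y hy),
    setLIntegral_const, volume_ball_euc hd hδ.le, ← mul_assoc,
    ← ENNReal.ofReal_mul (by positivity), inv_mul_cancel₀ (by positivity),
    ENNReal.ofReal_one, one_mul]

lemma hlmax_le_sup {d : ℕ} {δ : ℝ} (hδ : 0 < δ) (x : EuclideanSpace ℝ (Fin d)) :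
    HLMax (fDelta d δ) x ≤ ENNReal.ofReal ((δ^d)⁻¹) := by
  apply iSup₂_le
  intro r hr
  have hle : (∫⁻ y in ball x r, (‖fDelta d δ y‖₊ : ℝ≥0∞))
      ≤ ENNReal.ofReal ((δ^d)⁻¹) * volume (ball x r) := by
    calc (∫⁻ y in ball x r, (‖fDelta d δ y‖₊ : ℝ≥0∞))
        ≤ ∫⁻ _ in ball x r, ENNReal.ofReal ((δ^d)⁻¹) := by
          apply setLIntegral_mono' measurableSet_ball
          intro y _
          rw [← enorm_eq_nnnorm, ← ofReal_norm, norm_fDelta hδ]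
          apply ENNReal.ofReal_le_ofReal
          split_ifs
          · exact le_rfl
          · positivity
      _ = ENNReal.ofReal ((δ^d)⁻¹) * volume (ball x r) := setLIntegral_const _ _
  calc (volume (ball x r))⁻¹ * ∫⁻ y in ball x r, (‖fDelta d δ y‖₊ : ℝ≥0∞)
      ≤ (volume (ball x r))⁻¹ * (ENNReal.ofReal ((δ^d)⁻¹) * volume (ball x r)) :=
        mul_le_mul_right hle _
    _ = ENNReal.ofReal ((δ^d)⁻¹) := by
        rw [mul_comm (ENNReal.ofReal _) _, ← mul_assoc,
          ENNReal.inv_mul_cancel (measure_ball_pos volume x hr).ne' measure_ball_lt_top.ne,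
          one_mul]

lemma hlmax_ge {d : ℕ} (hd : 0 < d) {δ : ℝ} (hδ : 0 < δ) (x : EuclideanSpace ℝ (Fin d)) :
    (ENNReal.ofReal ((‖x‖ + δ)^d))⁻¹ ≤ HLMax (fDelta d δ) x := by
  set r : ℝ := ‖x‖ + δ with hrdef
  have hr : 0 < r := by positivity
  have hsub : ball (0 : EuclideanSpace ℝ (Fin d)) δ ⊆ ball x r := by
    intro y hy
    rw [mem_ball, dist_zero_right] at hy
    rw [mem_ball, dist_eq_norm]
    calc ‖y - x‖ ≤ ‖y‖ + ‖x‖ := norm_sub_le _ _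
      _ < r := by rw [hrdef]; linarith
  have hI : volume (ball (0 : EuclideanSpace ℝ (Fin d)) 1)
      ≤ ∫⁻ y in ball x r, (‖fDelta d δ y‖₊ : ℝ≥0∞) := by
    rw [← lintegral_fDelta_ball hd hδ]
    exact lintegral_mono_set hsub
  have hterm : (ENNReal.ofReal (r^d))⁻¹
      ≤ (volume (ball x r))⁻¹ * ∫⁻ y in ball x r, (‖fDelta d δ y‖₊ : ℝ≥0∞) := by
    have hball : volume (ball x r) = ENNReal.ofReal (r^d)
        * volume (ball (0 : EuclideanSpace ℝ (Fin d)) 1) := by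
      haveI : Nonempty (Fin d) := ⟨⟨0, hd⟩⟩
      rw [Measure.addHaar_ball volume x hr.le, finrank_euclideanSpace_fin]
    calc (ENNReal.ofReal (r^d))⁻¹
        = (volume (ball x r))⁻¹ * volume (ball (0 : EuclideanSpace ℝ (Fin d)) 1) := by
          rw [hball, ENNReal.mul_inv (Or.inr measure_ball_lt_top.ne)
            (Or.inr (measure_ball_pos volume 0 one_pos).ne'), mul_assoc,
            ENNReal.inv_mul_cancel (measure_ball_pos volume 0 one_pos).ne'
              measure_ball_lt_top.ne, mul_one]
      _ ≤ _ := mul_le_mul_right hI _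
  refine hterm.trans ?_
  exact le_iSup₂ (f := fun (r : ℝ) (_ : 0 < r) =>
    (volume (ball x r))⁻¹ * ∫⁻ y in ball x r, (‖fDelta d δ y‖₊ : ℝ≥0∞)) r hr

lemma hlmax_le_far {d : ℕ} (hd : 0 < d) {δ : ℝ} (hδ : 0 < δ)
    {x : EuclideanSpace ℝ (Fin d)} (hx : δ < ‖x‖) :
    HLMax (fDelta d δ) x ≤ (ENNReal.ofReal ((‖x‖ - δ)^d))⁻¹ := by
  apply iSup₂_le
  intro r hr
  by_cases hcap : ∃ y, y ∈ ball x r ∧ ‖y‖ < δ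
  · obtain ⟨y, hyr, hyδ⟩ := hcap
    have hrb : ‖x‖ - δ < r := by
      rw [mem_ball, dist_eq_norm] at hyr
      have : ‖x‖ ≤ ‖y - x‖ + ‖y‖ := by
        have h := norm_sub_le (y - x) y
        simp only [sub_sub_cancel_left, norm_neg] at h
        linarith
      linarith
    have hball : volume (ball x r) = ENNReal.ofReal (r^d)
        * volume (ball (0 : EuclideanSpace ℝ (Fin d)) 1) := by
      haveI : Nonempty (Fin d) := ⟨⟨0, hd⟩⟩
      rw [Measure.addHaar_ball volume x hr.le, finrank_euclideanSpace_fin]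
    calc (volume (ball x r))⁻¹ * ∫⁻ y in ball x r, (‖fDelta d δ y‖₊ : ℝ≥0∞)
        ≤ (volume (ball x r))⁻¹ * volume (ball (0 : EuclideanSpace ℝ (Fin d)) 1) :=
          mul_le_mul_right (lintegral_fDelta_le hd hδ _) _
      _ = (ENNReal.ofReal (r^d))⁻¹ := by
          rw [hball, ENNReal.mul_inv (Or.inr measure_ball_lt_top.ne)
            (Or.inr (measure_ball_pos volume 0 one_pos).ne'), mul_assoc,
            ENNReal.inv_mul_cancel (measure_ball_pos volume 0 one_pos).ne'
              measure_ball_lt_top.ne, mul_one]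
      _ ≤ (ENNReal.ofReal ((‖x‖ - δ)^d))⁻¹ := by
          apply ENNReal.inv_le_inv.mpr
          apply ENNReal.ofReal_le_ofReal
          exact pow_le_pow_left₀ (by linarith) hrb.le d
  · have hz : ∀ y ∈ ball x r, ((‖fDelta d δ y‖₊ : ℝ≥0∞)) = 0 := by
      intro y hy
      have : ¬ ‖y‖ < δ := fun h => hcap ⟨y, hy, h⟩
      simp [fDelta, this]
    rw [setLIntegral_congr_fun measurableSet_ball (fun y hy => hz y hy)]
    simp


lemma one_le_log_exp_add {t : ℝ} (ht : 0 ≤ t) : 1 ≤ Real.log (Real.exp 1 + t) := by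
  have h := Real.log_le_log (Real.exp_pos 1) (show Real.exp 1 ≤ Real.exp 1 + t by linarith)
  rwa [Real.log_exp] at h

lemma log_exp_add_nonneg {t : ℝ} (ht : 0 ≤ t) : 0 ≤ Real.log (Real.exp 1 + t) := by
  linarith [one_le_log_exp_add ht]

-- Ψ(x,t) ≤ t / log(e+t)
lemma psiFun_le {d : ℕ} (x : EuclideanSpace ℝ (Fin d)) {t : ℝ} (ht : 0 ≤ t) :
    PsiFun x t ≤ t / Real.log (Real.exp 1 + t) := by
  unfold PsiFun
  apply div_le_div_of_nonneg_left ht (by linarith [one_le_log_exp_add ht])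
  linarith [log_exp_add_nonneg (norm_nonneg x)]

-- Ψ(x,t) ≥ t / (log(e+t) + log(e+1)) for ‖x‖ ≤ 1
lemma psiFun_ge {d : ℕ} {x : EuclideanSpace ℝ (Fin d)} (hx : ‖x‖ ≤ 1) {t : ℝ} (ht : 0 ≤ t) :
    t / (Real.log (Real.exp 1 + t) + Real.log (Real.exp 1 + 1)) ≤ PsiFun x t := by
  unfold PsiFun
  apply div_le_div_of_nonneg_left ht
  · have := one_le_log_exp_add ht
    have := log_exp_add_nonneg (norm_nonneg x)
    linarith
  · have h := Real.log_le_log (by positivity)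
      (show Real.exp 1 + ‖x‖ ≤ Real.exp 1 + 1 by linarith)
    linarith [one_le_log_exp_add ht]

lemma psiFun_nonneg {d : ℕ} (x : EuclideanSpace ℝ (Fin d)) {t : ℝ} (ht : 0 ≤ t) :
    0 ≤ PsiFun x t := by
  unfold PsiFun
  have := one_le_log_exp_add ht
  have := log_exp_add_nonneg (norm_nonneg x)
  positivity

lemma toReal_hlmax_le {d : ℕ} {δ : ℝ} (hδ : 0 < δ) (x : EuclideanSpace ℝ (Fin d)) :
    (HLMax (fDelta d δ) x).toReal ≤ (δ^d)⁻¹ :=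
  ENNReal.toReal_le_of_le_ofReal (by positivity) (hlmax_le_sup hδ x)

lemma toReal_hlmax_le_far {d : ℕ} (hd : 0 < d) {δ : ℝ} (hδ : 0 < δ)
    {x : EuclideanSpace ℝ (Fin d)} (hx : δ < ‖x‖) :
    (HLMax (fDelta d δ) x).toReal ≤ ((‖x‖ - δ)^d)⁻¹ := by
  have hpos : (0:ℝ) < (‖x‖ - δ)^d := by
    apply pow_pos
    linarith
  apply ENNReal.toReal_le_of_le_ofReal (inv_nonneg.2 hpos.le)
  rw [ENNReal.ofReal_inv_of_pos hpos]
  exact hlmax_le_far hd hδ hx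

lemma toReal_hlmax_ge {d : ℕ} (hd : 0 < d) {δ : ℝ} (hδ : 0 < δ) (x : EuclideanSpace ℝ (Fin d)) :
    (((‖x‖ + δ)^d)⁻¹ : ℝ) ≤ (HLMax (fDelta d δ) x).toReal := by
  have hne : HLMax (fDelta d δ) x ≠ ⊤ :=
    ((hlmax_le_sup hδ x).trans_lt ENNReal.ofReal_lt_top).ne
  rw [← ENNReal.ofReal_le_iff_le_toReal hne, ENNReal.ofReal_inv_of_pos (by positivity)]
  exact hlmax_ge hd hδ x

lemma toReal_hlmax_nonneg {d : ℕ} {δ : ℝ} (x : EuclideanSpace ℝ (Fin d)) :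
    0 ≤ (HLMax (fDelta d δ) x).toReal := ENNReal.toReal_nonneg

-- pointwise lower bound on annulus: ‖x‖ ≤ 2^{-(j+1)}, δ ≤ 2^{-n}, j < n
lemma psi_annulus_lower {d : ℕ} (hd : 0 < d) {δ : ℝ} (hδ : 0 < δ) {j n : ℕ} (hjn : j < n)
    (hδn : δ ≤ ((2:ℝ)^n)⁻¹) {x : EuclideanSpace ℝ (Fin d)}
    (hx1 : ‖x‖ ≤ ((2:ℝ)^(j+1))⁻¹) :
    (2:ℝ)^(j*d) / ((2 * Real.log (Real.exp 1 + 1) + d) * (j+2))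
      ≤ PsiFun x (HLMax (fDelta d δ) x).toReal := by
  set A₁ : ℝ := Real.log (Real.exp 1 + 1) with hA₁
  have hA₁1 : 1 ≤ A₁ := one_le_log_exp_add one_pos.le
  set t : ℝ := (HLMax (fDelta d δ) x).toReal with htdef
  have ht0 : 0 ≤ t := ENNReal.toReal_nonneg
  -- ‖x‖ + δ ≤ 2^{-j}
  have hxd : ‖x‖ + δ ≤ ((2:ℝ)^j)⁻¹ := by
    have h1 : ((2:ℝ)^n)⁻¹ ≤ ((2:ℝ)^(j+1))⁻¹ := by
      apply inv_anti₀ (by positivity)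
      exact pow_le_pow_right₀ one_le_two hjn
    have h2 : ((2:ℝ)^(j+1))⁻¹ + ((2:ℝ)^(j+1))⁻¹ = ((2:ℝ)^j)⁻¹ := by
      rw [pow_succ]
      field_simp
      ring
    linarith
  -- t ≥ 2^{jd}
  have ht : (2:ℝ)^(j*d) ≤ t := by
    have h1 : (((‖x‖ + δ)^d)⁻¹ : ℝ) ≤ t := toReal_hlmax_ge hd hδ x
    have h2 : ((‖x‖ + δ)^d : ℝ) ≤ ((2:ℝ)^j)⁻¹^d :=
      pow_le_pow_left₀ (by positivity) hxd d
    have h3 : (((2:ℝ)^j)⁻¹^d)⁻¹ ≤ ((‖x‖ + δ)^d)⁻¹ := by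
      apply inv_anti₀ (by positivity) h2
    have h4 : (((2:ℝ)^j)⁻¹^d)⁻¹ = (2:ℝ)^(j*d) := by
      rw [inv_pow, inv_inv, ← pow_mul]
    linarith [h4 ▸ h3]
  have hx1' : ‖x‖ ≤ 1 := hx1.trans (by
    rw [inv_le_one_iff₀]
    right
    exact one_le_pow₀ one_le_two)
  -- chain
  have hchain1 : (2:ℝ)^(j*d) / (Real.log (Real.exp 1 + (2:ℝ)^(j*d)) + A₁)
      ≤ t / (Real.log (Real.exp 1 + t) + A₁) := psi_mono (by linarith) (by positivity) ht
  have hchain2 : t / (Real.log (Real.exp 1 + t) + A₁) ≤ PsiFun x t := psiFun_ge hx1' ht0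
  -- bound denominator
  have hden : Real.log (Real.exp 1 + (2:ℝ)^(j*d)) + A₁ ≤ (2 * A₁ + d) * (j+2) := by
    have h1 : (1:ℝ) ≤ (2:ℝ)^(j*d) := one_le_pow₀ one_le_two
    have h2 : Real.exp 1 + (2:ℝ)^(j*d) ≤ (Real.exp 1 + 1) * (2:ℝ)^(j*d) := by nlinarith [Real.exp_pos 1]
    have h3 : Real.log (Real.exp 1 + (2:ℝ)^(j*d)) ≤ A₁ + (j*d) * Real.log 2 := by
      calc Real.log (Real.exp 1 + (2:ℝ)^(j*d)) ≤ Real.log ((Real.exp 1 + 1) * (2:ℝ)^(j*d)) :=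
            Real.log_le_log (by positivity) h2
        _ = A₁ + (j*d) * Real.log 2 := by
            rw [Real.log_mul (by positivity) (by positivity), Real.log_pow]
            push_cast
            ring
    have hlog2 : Real.log 2 ≤ 1 := by
      calc Real.log 2 ≤ 2 - 1 := Real.log_le_sub_one_of_pos two_pos
        _ = 1 := by norm_num
    have hd1 : (1:ℝ) ≤ d := by exact_mod_cast hd
    have hj0 : (0:ℝ) ≤ (j:ℝ) := Nat.cast_nonneg j
    have hjd0 : (0:ℝ) ≤ (j:ℝ) * d := by positivity
    have hjd : (j:ℝ) * d * Real.log 2 ≤ (j : ℝ) * d := by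
      nlinarith [Real.log_nonneg (by norm_num : (1:ℝ) ≤ 2)]
    push_cast at h3 ⊢
    nlinarith [mul_nonneg (show (0:ℝ) ≤ 2*A₁ - 1 by linarith) hj0]
  have hfinal : (2:ℝ)^(j*d) / ((2 * A₁ + d) * (j+2))
      ≤ (2:ℝ)^(j*d) / (Real.log (Real.exp 1 + (2:ℝ)^(j*d)) + A₁) := by
    apply div_le_div_of_nonneg_left (by positivity) _ hden
    have := one_le_log_exp_add (show (0:ℝ) ≤ (2:ℝ)^(j*d) by positivity)
    linarith
  calc (2:ℝ)^(j*d) / ((2 * A₁ + d) * (j+2)) ≤ _ := hfinal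
    _ ≤ _ := hchain1
    _ ≤ _ := hchain2

-- pointwise upper bound on annulus: 2δ ≤ 2^{-(k+1)} < ‖x‖
lemma psi_annulus_upper {d : ℕ} (hd : 0 < d) {δ : ℝ} (hδ : 0 < δ) {k : ℕ}
    {x : EuclideanSpace ℝ (Fin d)} (h2δ : 2*δ ≤ ((2:ℝ)^(k+1))⁻¹)
    (hx : ((2:ℝ)^(k+1))⁻¹ < ‖x‖) :
    PsiFun x (HLMax (fDelta d δ) x).toReal
      ≤ (2:ℝ)^((k+2)*d) / (((k:ℝ)+2) * (d * Real.log 2)) := by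
  set t : ℝ := (HLMax (fDelta d δ) x).toReal with htdef
  have ht0 : 0 ≤ t := ENNReal.toReal_nonneg
  have hδx : δ < ‖x‖ := by
    have : 0 < ((2:ℝ)^(k+1))⁻¹ := by positivity
    linarith
  have hxd2 : ((2:ℝ)^(k+2))⁻¹ ≤ ‖x‖ - δ := by
    have h1 : ((2:ℝ)^(k+2))⁻¹ = ((2:ℝ)^(k+1))⁻¹ / 2 := by
      rw [pow_succ]
      field_simp
    have h2 : δ ≤ ‖x‖/2 := by linarith
    linarith [hx, h2]
  -- t ≤ 2^{(k+2)d}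
  have ht : t ≤ (2:ℝ)^((k+2)*d) := by
    have h1 : t ≤ ((‖x‖ - δ)^d)⁻¹ := toReal_hlmax_le_far hd hδ hδx
    have h2 : (((2:ℝ)^(k+2))⁻¹)^d ≤ (‖x‖ - δ)^d :=
      pow_le_pow_left₀ (by positivity) hxd2 d
    have h3 : ((‖x‖ - δ)^d)⁻¹ ≤ ((((2:ℝ)^(k+2))⁻¹)^d)⁻¹ :=
      inv_anti₀ (by positivity) h2
    have h4 : ((((2:ℝ)^(k+2))⁻¹)^d)⁻¹ = (2:ℝ)^((k+2)*d) := by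
      rw [inv_pow, inv_inv, ← pow_mul]
    linarith [h4 ▸ h3]
  have hchain : PsiFun x t ≤ (2:ℝ)^((k+2)*d) / (Real.log (Real.exp 1 + (2:ℝ)^((k+2)*d))) := by
    calc PsiFun x t ≤ t / Real.log (Real.exp 1 + t) := psiFun_le x ht0
      _ ≤ _ := by
          have := psi_mono (A := 0) le_rfl ht0 ht
          simpa using this
  have hden : ((k:ℝ)+2) * (d * Real.log 2) ≤ Real.log (Real.exp 1 + (2:ℝ)^((k+2)*d)) := by
    have h1 : Real.log ((2:ℝ)^((k+2)*d)) ≤ Real.log (Real.exp 1 + (2:ℝ)^((k+2)*d)) := by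
      apply Real.log_le_log (by positivity)
      linarith [Real.exp_pos 1]
    have h2 : Real.log ((2:ℝ)^((k+2)*d)) = ((k+2)*d : ℕ) * Real.log 2 := Real.log_pow _ _
    push_cast at h2
    nlinarith [h2 ▸ h1]
  have hdenpos : 0 < ((k:ℝ)+2) * (d * Real.log 2) := by
    have : (0:ℝ) < d := by exact_mod_cast hd
    have := Real.log_pos (by norm_num : (1:ℝ) < 2)
    positivity
  calc PsiFun x t ≤ _ := hchain
    _ ≤ (2:ℝ)^((k+2)*d) / (((k:ℝ)+2) * (d * Real.log 2)) :=
        div_le_div_of_nonneg_left (by positivity) hdenpos hden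

-- pointwise upper bound, central: all x
lemma psi_central_upper {d : ℕ} (hd : 0 < d) {δ : ℝ} (hδ : 0 < δ) (hδ1 : δ < 1)
    (x : EuclideanSpace ℝ (Fin d)) :
    PsiFun x (HLMax (fDelta d δ) x).toReal ≤ (δ^d)⁻¹ / ((d:ℝ) * Real.log (1/δ)) := by
  set t : ℝ := (HLMax (fDelta d δ) x).toReal with htdef
  have ht0 : 0 ≤ t := ENNReal.toReal_nonneg
  have ht : t ≤ (δ^d)⁻¹ := toReal_hlmax_le hδ x
  have hchain : PsiFun x t ≤ (δ^d)⁻¹ / (Real.log (Real.exp 1 + (δ^d)⁻¹)) := by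
    calc PsiFun x t ≤ t / Real.log (Real.exp 1 + t) := psiFun_le x ht0
      _ ≤ _ := by
          have := psi_mono (A := 0) le_rfl ht0 ht
          simpa using this
  have hden : (d:ℝ) * Real.log (1/δ) ≤ Real.log (Real.exp 1 + (δ^d)⁻¹) := by
    have h1 : Real.log ((δ^d)⁻¹) ≤ Real.log (Real.exp 1 + (δ^d)⁻¹) := by
      apply Real.log_le_log (by positivity)
      linarith [Real.exp_pos 1]
    have h2 : Real.log ((δ^d)⁻¹) = (d:ℝ) * Real.log (1/δ) := by
      rw [Real.log_inv, Real.log_pow, Real.log_div one_ne_zero hδ.ne', Real.log_one]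
      ring
    linarith [h2 ▸ h1]
  have hdenpos : 0 < (d:ℝ) * Real.log (1/δ) := by
    have h1 : (0:ℝ) < d := by exact_mod_cast hd
    have h2 : 0 < Real.log (1/δ) := Real.log_pos (by rw [lt_div_iff₀ hδ]; linarith)
    positivity
  calc PsiFun x t ≤ _ := hchain
    _ ≤ _ := div_le_div_of_nonneg_left (by positivity) hdenpos hden

lemma log_inv_delta_gt {δ : ℝ} (hδ : 0 < δ) (hδe : δ < Real.exp (-(Real.exp 1))) :
    Real.exp 1 < Real.log (1/δ) := by
  have h1 : Real.log δ < -(Real.exp 1) := by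
    calc Real.log δ < Real.log (Real.exp (-(Real.exp 1))) := Real.log_lt_log hδ hδe
      _ = -(Real.exp 1) := Real.log_exp _
  rw [one_div, Real.log_inv]
  linarith

lemma loglog_ge_one {δ : ℝ} (hδ : 0 < δ) (hδe : δ < Real.exp (-(Real.exp 1))) :
    1 ≤ Real.log (Real.log (1/δ)) := by
  have h := log_inv_delta_gt hδ hδe
  have h2 : Real.log (Real.exp 1) < Real.log (Real.log (1/δ)) :=
    Real.log_lt_log (Real.exp_pos 1) h
  rw [Real.log_exp] at h2
  linarith

lemma half_le_log_two : (1:ℝ)/2 ≤ Real.log 2 := by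
  have hsq : Real.exp (1/2) ^ 2 = Real.exp 1 := by
    rw [sq, ← Real.exp_add]
    norm_num
  have h2 : Real.exp (1/2) ≤ 2 := by
    nlinarith [Real.exp_pos (1/2), Real.exp_one_lt_d9]
  calc (1:ℝ)/2 = Real.log (Real.exp (1/2)) := (Real.log_exp _).symm
    _ ≤ Real.log 2 := Real.log_le_log (Real.exp_pos _) h2

lemma log_two_le_one : Real.log 2 ≤ 1 := by
  calc Real.log 2 ≤ 2 - 1 := Real.log_le_sub_one_of_pos two_pos
    _ = 1 := by norm_num

lemma n_facts {δ : ℝ} (hδ : 0 < δ) (hδe : δ < Real.exp (-(Real.exp 1))) :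
    1 ≤ ⌊Real.logb 2 (1/δ)⌋₊ ∧ δ ≤ ((2:ℝ)^⌊Real.logb 2 (1/δ)⌋₊)⁻¹ ∧
      ((2:ℝ)^(⌊Real.logb 2 (1/δ)⌋₊+1))⁻¹ < δ ∧
      (⌊Real.logb 2 (1/δ)⌋₊ : ℝ) ≤ 2 * Real.log (1/δ) ∧
      Real.log (1/δ) ≤ (⌊Real.logb 2 (1/δ)⌋₊ : ℝ) + 2 := by
  have he : Real.exp 1 < Real.log (1/δ) := log_inv_delta_gt hδ hδe
  have he2 : (2:ℝ) ≤ Real.exp 1 := by linarith [Real.add_one_le_exp 1]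
  have hlogpos : 0 < Real.log (1/δ) := by linarith
  have hlog2pos : 0 < Real.log 2 := Real.log_pos one_lt_two
  have hlb : Real.logb 2 (1/δ) = Real.log (1/δ) / Real.log 2 := rfl
  have hlbpos : 0 < Real.logb 2 (1/δ) := by rw [hlb]; positivity
  have hδinvpos : 0 < 1/δ := by positivity
  set n := ⌊Real.logb 2 (1/δ)⌋₊ with hn
  have hge1 : 1 ≤ n := by
    apply Nat.le_floor
    rw [hlb, le_div_iff₀ hlog2pos]
    push_cast
    linarith [log_two_le_one]
  have hfl : (n:ℝ) ≤ Real.logb 2 (1/δ) := Nat.floor_le hlbpos.le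
  have hb : δ ≤ ((2:ℝ)^n)⁻¹ := by
    have h2n : (2:ℝ)^(n:ℕ) ≤ 1/δ := by
      have h := Real.rpow_le_rpow_of_exponent_le one_le_two hfl
      rw [Real.rpow_logb two_pos (by norm_num) hδinvpos, Real.rpow_natCast] at h
      exact h
    calc δ = (1/δ)⁻¹ := by field_simp
      _ ≤ ((2:ℝ)^n)⁻¹ := inv_anti₀ (by positivity) h2n
  have hc : ((2:ℝ)^(n+1))⁻¹ < δ := by
    have hfl2 : Real.logb 2 (1/δ) < (n:ℝ)+1 := Nat.lt_floor_add_one _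
    have h2n : (1:ℝ)/δ < (2:ℝ)^(n+1) := by
      have h := Real.rpow_lt_rpow_of_exponent_lt one_lt_two hfl2
      rw [Real.rpow_logb two_pos (by norm_num) hδinvpos] at h
      have : ((2:ℝ):ℝ)^((n:ℝ)+1) = (2:ℝ)^(n+1:ℕ) := by
        rw [← Real.rpow_natCast 2 (n+1)]
        push_cast
        ring_nf
      rwa [this] at h
    have h3 : ((2:ℝ)^(n+1))⁻¹ < (1/δ)⁻¹ := by
      apply inv_strictAnti₀ hδinvpos h2n
    calc ((2:ℝ)^(n+1))⁻¹ < (1/δ)⁻¹ := h3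
      _ = δ := by field_simp
  have hd' : (n:ℝ) ≤ 2 * Real.log (1/δ) := by
    calc (n:ℝ) ≤ Real.logb 2 (1/δ) := hfl
      _ ≤ 2 * Real.log (1/δ) := by
          rw [hlb, div_le_iff₀ hlog2pos]
          nlinarith [half_le_log_two]
  have he' : Real.log (1/δ) ≤ (n:ℝ) + 2 := by
    have h1 : Real.log (1/δ) ≤ Real.logb 2 (1/δ) := by
      rw [hlb, le_div_iff₀ hlog2pos]
      nlinarith [log_two_le_one]
    have h2 : Real.logb 2 (1/δ) < (n:ℝ)+1 := Nat.lt_floor_add_one _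
    linarith
  exact ⟨hge1, hb, hc, hd', he'⟩

lemma partB_lower {d : ℕ} (hd : 0 < d) {δ : ℝ} (hδ : 0 < δ)
    (hδe : δ < Real.exp (-(Real.exp 1))) :
    ENNReal.ofReal (((volume (ball (0 : EuclideanSpace ℝ (Fin d)) 1)).toReal
        * (((2:ℝ)^d)⁻¹ / (2 * (2 * Real.log (Real.exp 1 + 1) + d)) / 4))
        * Real.log (Real.log (1/δ)))
      ≤ ∫⁻ x in closedBall (0 : EuclideanSpace ℝ (Fin d)) 1,
          ENNReal.ofReal (PsiFun x ((HLMax (fDelta d δ) x).toReal)) := by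
  classical
  obtain ⟨hn1, hδn, hδn', hnle, hnge⟩ := n_facts hδ hδe
  set n := ⌊Real.logb 2 (1/δ)⌋₊ with hndef
  set A₁ : ℝ := Real.log (Real.exp 1 + 1) with hA₁def
  have hA₁1 : 1 ≤ A₁ := one_le_log_exp_add one_pos.le
  have hd1 : (1:ℝ) ≤ d := by exact_mod_cast hd
  set v := volume (ball (0 : EuclideanSpace ℝ (Fin d)) 1) with hvdef
  haveI : Nonempty (Fin d) := ⟨⟨0, hd⟩⟩
  have hvne : v ≠ ⊤ := measure_ball_lt_top.ne
  have hvR : v = ENNReal.ofReal v.toReal := (ENNReal.ofReal_toReal hvne).symm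
  have hvcb : ∀ r : ℝ, 0 ≤ r →
      volume (closedBall (0 : EuclideanSpace ℝ (Fin d)) r) = ENNReal.ofReal (r^d) * v := by
    intro r hr
    rw [hvdef, Measure.addHaar_closedBall volume 0 hr, finrank_euclideanSpace_fin]
  -- annuli
  set S : ℕ → Set (EuclideanSpace ℝ (Fin d)) := fun j =>
    closedBall 0 (((2:ℝ)^(j+1))⁻¹) \ closedBall 0 (((2:ℝ)^(j+2))⁻¹) with hSdef
  have hmeasS : ∀ j, MeasurableSet (S j) :=
    fun j => measurableSet_closedBall.diff measurableSet_closedBall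
  have hSsub : ∀ j, S j ⊆ closedBall (0 : EuclideanSpace ℝ (Fin d)) 1 := by
    intro j x hx
    have h1 : x ∈ closedBall (0 : EuclideanSpace ℝ (Fin d)) (((2:ℝ)^(j+1))⁻¹) := hx.1
    apply closedBall_subset_closedBall _ h1
    rw [inv_le_one_iff₀]
    right
    exact one_le_pow₀ one_le_two
  have hkey : ∀ i j : ℕ, i < j → Disjoint (S i) (S j) := by
    intro i j hlt
    apply Set.disjoint_left.mpr
    intro x hxi hxj
    have h1 : ‖x‖ ≤ ((2:ℝ)^(j+1))⁻¹ := by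
      have := hxj.1
      rwa [mem_closedBall, dist_zero_right] at this
    have h2 : ¬ (‖x‖ ≤ ((2:ℝ)^(i+2))⁻¹) := by
      have h3 := hxi.2
      simpa [mem_closedBall, dist_zero_right] using h3
    apply h2
    refine h1.trans (inv_anti₀ (by positivity) ?_)
    exact pow_le_pow_right₀ one_le_two (by omega)
  have hdisj : (↑(Finset.range n) : Set ℕ).PairwiseDisjoint S := by
    intro i _ j _ hij
    exact hij.lt_or_gt.elim (hkey i j) (fun h => (hkey j i h).symm)
  -- per-annulus bound
  set b : ℕ → ℝ := fun j => (2:ℝ)^(j*d) / ((2 * A₁ + d) * (j+2)) with hbdef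
  set e : ℕ → ℝ := fun j => ((2:ℝ)^d)⁻¹ / (2 * (2 * A₁ + d)) * (1/(j+2)) with hedef
  have hbe : ∀ j, b j * (((2:ℝ)^(j+1))⁻¹^d / 2) = e j := by
    intro j
    rw [hbdef, hedef]
    have h1 : ((2:ℝ)^(j+1))⁻¹^d = ((2:ℝ)^(j*d) * (2:ℝ)^d)⁻¹ := by
      rw [inv_pow, ← pow_mul, add_mul, one_mul, pow_add]
    rw [h1]
    have hp1 : (0:ℝ) < (2:ℝ)^(j*d) := by positivity
    have hp2 : (0:ℝ) < (2:ℝ)^d := by positivity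
    have hp3 : (0:ℝ) < (j:ℝ) + 2 := by positivity
    have hp4 : (0:ℝ) < 2 * A₁ + d := by positivity
    field_simp
  have hannulus : ∀ j ∈ Finset.range n,
      ENNReal.ofReal (e j) * v
        ≤ ∫⁻ x in S j, ENNReal.ofReal (PsiFun x ((HLMax (fDelta d δ) x).toReal)) := by
    intro j hj
    rw [Finset.mem_range] at hj
    -- measure lower bound
    have hμ : ENNReal.ofReal (((2:ℝ)^(j+1))⁻¹^d / 2) * v ≤ volume (S j) := by
      have hsub : closedBall (0 : EuclideanSpace ℝ (Fin d)) (((2:ℝ)^(j+2))⁻¹)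
          ⊆ closedBall 0 (((2:ℝ)^(j+1))⁻¹) := by
        apply closedBall_subset_closedBall
        apply inv_anti₀ (by positivity)
        exact pow_le_pow_right₀ one_le_two (by omega)
      rw [hSdef]
      simp only []
      rw [measure_diff hsub measurableSet_closedBall.nullMeasurableSet
        measure_closedBall_lt_top.ne, hvcb _ (by positivity), hvcb _ (by positivity)]
      apply ENNReal.le_sub_of_add_le_right
      · exact ENNReal.mul_ne_top ENNReal.ofReal_ne_top hvne
      · rw [← add_mul, ← ENNReal.ofReal_add (by positivity) (by positivity)]
        apply mul_le_mul_left
        apply ENNReal.ofReal_le_ofReal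
        have h1 : (((2:ℝ)^(j+2))⁻¹)^d ≤ (((2:ℝ)^(j+1))⁻¹)^d / 2 := by
          have h2 : ((2:ℝ)^(j+2))⁻¹ = ((2:ℝ)^(j+1))⁻¹ / 2 := by
            rw [pow_succ]
            field_simp
          rw [h2, div_pow]
          apply div_le_div_of_nonneg_left (by positivity) two_pos
          calc (2:ℝ) = 2^1 := (pow_one 2).symm
            _ ≤ 2^d := pow_le_pow_right₀ one_le_two hd
        linarith
    -- pointwise bound
    have hpt : ∀ x ∈ S j, ENNReal.ofReal (b j)
        ≤ ENNReal.ofReal (PsiFun x ((HLMax (fDelta d δ) x).toReal)) := by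
      intro x hx
      apply ENNReal.ofReal_le_ofReal
      have hx1 : ‖x‖ ≤ ((2:ℝ)^(j+1))⁻¹ := by
        have := hx.1
        rwa [mem_closedBall, dist_zero_right] at this
      exact psi_annulus_lower hd hδ hj hδn hx1
    calc ENNReal.ofReal (e j) * v
        = ENNReal.ofReal (b j) * (ENNReal.ofReal (((2:ℝ)^(j+1))⁻¹^d / 2) * v) := by
          rw [← mul_assoc, ← ENNReal.ofReal_mul (by positivity), hbe j]
      _ ≤ ENNReal.ofReal (b j) * volume (S j) := mul_le_mul_right hμ _
      _ = ∫⁻ _ in S j, ENNReal.ofReal (b j) := (setLIntegral_const _ _).symm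
      _ ≤ _ := setLIntegral_mono' (hmeasS j) hpt
  -- sum up
  have hsum : ∑ j ∈ Finset.range n, ENNReal.ofReal (e j) * v
      ≤ ∫⁻ x in closedBall (0 : EuclideanSpace ℝ (Fin d)) 1,
          ENNReal.ofReal (PsiFun x ((HLMax (fDelta d δ) x).toReal)) := by
    calc ∑ j ∈ Finset.range n, ENNReal.ofReal (e j) * v
        ≤ ∑ j ∈ Finset.range n,
            ∫⁻ x in S j, ENNReal.ofReal (PsiFun x ((HLMax (fDelta d δ) x).toReal)) :=
          Finset.sum_le_sum hannulus
      _ = ∫⁻ x in ⋃ j ∈ Finset.range n, S j,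
            ENNReal.ofReal (PsiFun x ((HLMax (fDelta d δ) x).toReal)) :=
          (lintegral_biUnion_finset hdisj (fun j _ => hmeasS j) _).symm
      _ ≤ _ := lintegral_mono_set (Set.iUnion₂_subset (fun j _ => hSsub j))
  -- real sum bound
  set L : ℝ := Real.log (Real.log (1/δ)) with hLdef
  have hL1 : 1 ≤ L := loglog_ge_one hδ hδe
  have hsumreal : ((2:ℝ)^d)⁻¹ / (2 * (2 * A₁ + d)) * (L/4) ≤ ∑ j ∈ Finset.range n, e j := by
    have hconst : (0:ℝ) ≤ ((2:ℝ)^d)⁻¹ / (2 * (2 * A₁ + d)) := by positivity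
    rw [hedef, ← Finset.mul_sum]
    apply mul_le_mul_of_nonneg_left _ hconst
    -- ∑ 1/(j+2) ≥ L/4
    have hs1 : (1:ℝ)/2 ≤ ∑ j ∈ Finset.range n, (1:ℝ)/((j:ℝ)+2) := by
      have h0 : (0:ℕ) ∈ Finset.range n := Finset.mem_range.mpr hn1
      have := Finset.single_le_sum (f := fun j : ℕ => (1:ℝ)/((j:ℝ)+2))
        (fun i _ => by positivity) h0
      simpa using this
    have hs2 : Real.log ((n:ℝ)+2) - 1 ≤ ∑ j ∈ Finset.range n, (1:ℝ)/((j:ℝ)+2) := by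
      have h1 := sum_inv_ge_log (n+1)
      rw [Finset.sum_range_succ'] at h1
      push_cast at h1 ⊢
      have h2 : ∑ x ∈ Finset.range n, (1:ℝ)/((x:ℝ)+1+1)
          = ∑ j ∈ Finset.range n, (1:ℝ)/((j:ℝ)+2) :=
        Finset.sum_congr rfl (fun x _ => by ring_nf)
      have h3 : ((n:ℝ)+1+1) = (n:ℝ)+2 := by ring
      rw [h2, h3] at h1
      linarith
    have hs3 : L ≤ Real.log ((n:ℝ)+2) := by
      rw [hLdef]
      apply Real.log_le_log (by linarith [log_inv_delta_gt hδ hδe, Real.exp_pos 1])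
      exact hnge
    rcases le_or_gt L 2 with h | h
    · calc L/4 ≤ 1/2 := by linarith
        _ ≤ _ := hs1
    · calc L/4 ≤ L - 1 := by linarith
        _ ≤ Real.log ((n:ℝ)+2) - 1 := by linarith
        _ ≤ _ := hs2
  -- conclude
  refine le_trans ?_ hsum
  have hstep : ∑ j ∈ Finset.range n, ENNReal.ofReal (e j) * v
      = ENNReal.ofReal (∑ j ∈ Finset.range n, e j) * v := by
    rw [ENNReal.ofReal_sum_of_nonneg (fun j _ => by rw [hedef]; positivity), Finset.sum_mul]
  rw [hstep]
  have hsnn : 0 ≤ ∑ j ∈ Finset.range n, e j := by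
    apply Finset.sum_nonneg
    intro j _
    rw [hedef]
    positivity
  calc ENNReal.ofReal (v.toReal * (((2:ℝ)^d)⁻¹ / (2 * (2 * A₁ + d)) / 4) * L)
      ≤ ENNReal.ofReal ((∑ j ∈ Finset.range n, e j) * v.toReal) := by
        apply ENNReal.ofReal_le_ofReal
        calc v.toReal * (((2:ℝ)^d)⁻¹ / (2 * (2 * A₁ + d)) / 4) * L
            = (((2:ℝ)^d)⁻¹ / (2 * (2 * A₁ + d)) * (L/4)) * v.toReal := by ring
          _ ≤ _ := mul_le_mul_of_nonneg_right hsumreal ENNReal.toReal_nonneg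
    _ = ENNReal.ofReal (∑ j ∈ Finset.range n, e j) * ENNReal.ofReal v.toReal :=
        ENNReal.ofReal_mul hsnn
    _ = ENNReal.ofReal (∑ j ∈ Finset.range n, e j) * v := by rw [← hvR]

lemma lintegral_biUnion_finset_le {α β : Type*} [MeasurableSpace α] {μ : Measure α}
    (s : Finset β) (t : β → Set α) (f : α → ℝ≥0∞) :
    ∫⁻ x in ⋃ b ∈ s, t b, f x ∂μ ≤ ∑ b ∈ s, ∫⁻ x in t b, f x ∂μ := by
  classical
  induction s using Finset.induction_on with
  | empty => simp
  | @insert a s' ha ih =>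
    rw [Finset.set_biUnion_insert, Finset.sum_insert ha]
    exact (lintegral_union_le _ _ _).trans (add_le_add le_rfl ih)

lemma floor_logb_facts {s : ℝ} (hs : 0 < s) (hs1 : s ≤ 1) :
    s ≤ ((2:ℝ)^⌊Real.logb 2 (1/s)⌋₊)⁻¹ ∧ ((2:ℝ)^(⌊Real.logb 2 (1/s)⌋₊+1))⁻¹ < s := by
  have hspos : 0 < 1/s := by positivity
  have hlbnn : 0 ≤ Real.logb 2 (1/s) :=
    Real.logb_nonneg one_lt_two (by rw [le_div_iff₀ hs]; linarith)
  set k := ⌊Real.logb 2 (1/s)⌋₊ with hkdef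
  constructor
  · have h2n : (2:ℝ)^(k:ℕ) ≤ 1/s := by
      have h := Real.rpow_le_rpow_of_exponent_le one_le_two (Nat.floor_le hlbnn)
      rw [Real.rpow_logb two_pos (by norm_num) hspos, Real.rpow_natCast] at h
      exact h
    calc s = (1/s)⁻¹ := by field_simp
      _ ≤ ((2:ℝ)^k)⁻¹ := inv_anti₀ (by positivity) h2n
  · have hfl2 : Real.logb 2 (1/s) < (k:ℝ)+1 := Nat.lt_floor_add_one _
    have h2n : (1:ℝ)/s < (2:ℝ)^(k+1) := by
      have h := Real.rpow_lt_rpow_of_exponent_lt one_lt_two hfl2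
      rw [Real.rpow_logb two_pos (by norm_num) hspos] at h
      have heq : ((2:ℝ):ℝ)^((k:ℝ)+1) = (2:ℝ)^(k+1:ℕ) := by
        rw [← Real.rpow_natCast 2 (k+1)]
        push_cast
        ring_nf
      rwa [heq] at h
    calc ((2:ℝ)^(k+1))⁻¹ < (1/s)⁻¹ := inv_strictAnti₀ hspos h2n
      _ = s := by field_simp

lemma partB_upper {d : ℕ} (hd : 0 < d) {δ : ℝ} (hδ : 0 < δ)
    (hδe : δ < Real.exp (-(Real.exp 1))) :
    (∫⁻ x in closedBall (0 : EuclideanSpace ℝ (Fin d)) 1,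
        ENNReal.ofReal (PsiFun x ((HLMax (fDelta d δ) x).toReal)))
      ≤ ENNReal.ofReal (((volume (ball (0 : EuclideanSpace ℝ (Fin d)) 1)).toReal
          * ((4:ℝ)^d + 3 * (4:ℝ)^d / (d * Real.log 2)))
          * Real.log (Real.log (1/δ))) := by
  classical
  obtain ⟨hn1, hδn, hδn', hnle, hnge⟩ := n_facts hδ hδe
  set n := ⌊Real.logb 2 (1/δ)⌋₊ with hndef
  obtain ⟨m, hm⟩ : ∃ m, n = m + 1 := ⟨n - 1, (Nat.succ_pred_eq_of_pos hn1).symm⟩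
  have hd1 : (1:ℝ) ≤ d := by exact_mod_cast hd
  have hδ1 : δ < 1 := hδe.trans (Real.exp_lt_one_iff.mpr (by linarith [Real.exp_pos 1]))
  have hlogδ : Real.exp 1 < Real.log (1/δ) := log_inv_delta_gt hδ hδe
  have hlogδ1 : 1 ≤ Real.log (1/δ) := by linarith [Real.add_one_le_exp 1]
  set L : ℝ := Real.log (Real.log (1/δ)) with hLdef
  have hL1 : 1 ≤ L := loglog_ge_one hδ hδe
  set v := volume (ball (0 : EuclideanSpace ℝ (Fin d)) 1) with hvdef
  haveI : Nonempty (Fin d) := ⟨⟨0, hd⟩⟩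
  have hvne : v ≠ ⊤ := measure_ball_lt_top.ne
  have hvR : v = ENNReal.ofReal v.toReal := (ENNReal.ofReal_toReal hvne).symm
  have hvtnn : 0 ≤ v.toReal := ENNReal.toReal_nonneg
  have hvcb : ∀ r : ℝ, 0 ≤ r →
      volume (closedBall (0 : EuclideanSpace ℝ (Fin d)) r) = ENNReal.ofReal (r^d) * v := by
    intro r hr
    rw [hvdef, Measure.addHaar_closedBall volume 0 hr, finrank_euclideanSpace_fin]
  set T : ℕ → Set (EuclideanSpace ℝ (Fin d)) := fun k =>
    closedBall 0 (((2:ℝ)^k)⁻¹) \ closedBall 0 (((2:ℝ)^(k+1))⁻¹) with hTdef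
  set S₀ : Set (EuclideanSpace ℝ (Fin d)) := closedBall 0 (((2:ℝ)^m)⁻¹) with hS₀def
  -- covering
  have hcover : closedBall (0 : EuclideanSpace ℝ (Fin d)) 1
      ⊆ S₀ ∪ ⋃ k ∈ Finset.range m, T k := by
    intro x hx
    rw [mem_closedBall, dist_zero_right] at hx
    by_cases hx0 : ‖x‖ ≤ ((2:ℝ)^m)⁻¹
    · left
      rwa [hS₀def, mem_closedBall, dist_zero_right]
    · right
      push_neg at hx0
      have hxpos : 0 < ‖x‖ := lt_trans (by positivity) hx0
      set k := ⌊Real.logb 2 (1/‖x‖)⌋₊ with hkdef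
      obtain ⟨hk1, hk2⟩ := floor_logb_facts hxpos hx
      have hkm : k < m := by
        have h1 : (1:ℝ)/‖x‖ < 2^m := by
          rw [div_lt_iff₀ hxpos]
          rw [← div_lt_iff₀' (by positivity : (0:ℝ) < (2:ℝ)^m)]
          rw [div_eq_mul_inv, one_mul]
          exact hx0
        have h2 : Real.logb 2 ((1:ℝ)/‖x‖) < m := by
          have h3 := Real.logb_lt_logb (b := 2) one_lt_two (by positivity) h1
          rwa [Real.logb_pow, Real.logb_self_eq_one (by norm_num : (1:ℝ) < 2), mul_one] at h3
        rw [hkdef]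
        exact Nat.floor_lt (Real.logb_nonneg one_lt_two (by rw [le_div_iff₀ hxpos]; linarith)) |>.mpr h2
      refine Set.mem_biUnion (Finset.mem_range.mpr hkm) ?_
      rw [hTdef]
      constructor
      · rw [mem_closedBall, dist_zero_right]; exact hk1
      · rw [mem_closedBall, dist_zero_right]; push_neg; exact hk2
  -- central bound
  have hcentral : (∫⁻ x in S₀,
        ENNReal.ofReal (PsiFun x ((HLMax (fDelta d δ) x).toReal)))
      ≤ ENNReal.ofReal ((4:ℝ)^d) * v := by
    have hrm4 : ((2:ℝ)^m)⁻¹ ≤ 4*δ := by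
      have h1 : ((2:ℝ)^m)⁻¹ = 4 * ((2:ℝ)^(m+2))⁻¹ := by
        have he : ((2:ℝ)^(m+2)) = 4 * (2:ℝ)^m := by rw [pow_add]; ring
        rw [he, mul_inv]
        have hp : ((2:ℝ)^m) ≠ 0 := by positivity
        field_simp
      have h2 : ((2:ℝ)^(m+2))⁻¹ < δ := by
        have : m + 2 = n + 1 := by omega
        rw [this]
        exact hδn'
      linarith
    calc (∫⁻ x in S₀, ENNReal.ofReal (PsiFun x ((HLMax (fDelta d δ) x).toReal)))
        ≤ ∫⁻ _ in S₀, ENNReal.ofReal ((δ^d)⁻¹ / ((d:ℝ) * Real.log (1/δ))) :=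
          setLIntegral_mono' measurableSet_closedBall
            (fun x _ => ENNReal.ofReal_le_ofReal (psi_central_upper hd hδ hδ1 x))
      _ = ENNReal.ofReal ((δ^d)⁻¹ / ((d:ℝ) * Real.log (1/δ)))
            * (ENNReal.ofReal ((((2:ℝ)^m)⁻¹)^d) * v) := by
          rw [setLIntegral_const, hS₀def, hvcb _ (by positivity)]
      _ = ENNReal.ofReal ((δ^d)⁻¹ / ((d:ℝ) * Real.log (1/δ)) * (((2:ℝ)^m)⁻¹)^d) * v := by
          rw [← mul_assoc, ← ENNReal.ofReal_mul (by positivity)]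
      _ ≤ ENNReal.ofReal ((4:ℝ)^d) * v := by
          apply mul_le_mul_left
          apply ENNReal.ofReal_le_ofReal
          have h3 : (((2:ℝ)^m)⁻¹)^d ≤ (4*δ)^d := pow_le_pow_left₀ (by positivity) hrm4 d
          have h4 : (4*δ)^d = 4^d * δ^d := mul_pow 4 δ d
          have h5 : (0:ℝ) < δ^d := by positivity
          have h6 : (0:ℝ) < (d:ℝ) * Real.log (1/δ) := by positivity
          calc (δ^d)⁻¹ / ((d:ℝ) * Real.log (1/δ)) * (((2:ℝ)^m)⁻¹)^d
              ≤ (δ^d)⁻¹ / ((d:ℝ) * Real.log (1/δ)) * (4^d * δ^d) := by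
                rw [← h4]
                apply mul_le_mul_of_nonneg_left h3 (by positivity)
            _ = 4^d / ((d:ℝ) * Real.log (1/δ)) := by field_simp
            _ ≤ 4^d := by
                rw [div_le_iff₀ h6]
                have h7 : (1:ℝ) ≤ (d:ℝ) * Real.log (1/δ) := by nlinarith
                nlinarith [mul_le_mul_of_nonneg_left h7
                  (le_of_lt (pow_pos (show (0:ℝ) < 4 by norm_num) d))]
  -- annuli bound
  have hann : ∀ k ∈ Finset.range m,
      (∫⁻ x in T k, ENNReal.ofReal (PsiFun x ((HLMax (fDelta d δ) x).toReal)))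
        ≤ ENNReal.ofReal ((4:ℝ)^d / ((d:ℝ) * Real.log 2) * (1/((k:ℝ)+2))) * v := by
    intro k hk
    rw [Finset.mem_range] at hk
    have h2δ : 2*δ ≤ ((2:ℝ)^(k+1))⁻¹ := by
      have h1 : ((2:ℝ)^(k+1))⁻¹ ≥ ((2:ℝ)^m)⁻¹ :=
        inv_anti₀ (by positivity) (pow_le_pow_right₀ one_le_two (by omega))
      have h2 : ((2:ℝ)^m)⁻¹ = 2 * ((2:ℝ)^(m+1))⁻¹ := by
        rw [pow_succ]
        field_simp
      have h3 : δ ≤ ((2:ℝ)^(m+1))⁻¹ := by rw [← hm]; exact hδn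
      linarith
    have hbound : ∀ x ∈ T k, ENNReal.ofReal (PsiFun x ((HLMax (fDelta d δ) x).toReal))
        ≤ ENNReal.ofReal ((2:ℝ)^((k+2)*d) / (((k:ℝ)+2) * ((d:ℝ) * Real.log 2))) := by
      intro x hx
      apply ENNReal.ofReal_le_ofReal
      have hxg : ((2:ℝ)^(k+1))⁻¹ < ‖x‖ := by
        have h1 := hx.2
        simp only [mem_closedBall, dist_zero_right, not_le] at h1
        exact h1
      exact psi_annulus_upper hd hδ h2δ hxg
    calc (∫⁻ x in T k, ENNReal.ofReal (PsiFun x ((HLMax (fDelta d δ) x).toReal)))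
        ≤ ∫⁻ _ in T k, ENNReal.ofReal ((2:ℝ)^((k+2)*d) / (((k:ℝ)+2) * ((d:ℝ) * Real.log 2))) :=
          setLIntegral_mono' (measurableSet_closedBall.diff measurableSet_closedBall) hbound
      _ = ENNReal.ofReal ((2:ℝ)^((k+2)*d) / (((k:ℝ)+2) * ((d:ℝ) * Real.log 2)))
            * volume (T k) := setLIntegral_const _ _
      _ ≤ ENNReal.ofReal ((2:ℝ)^((k+2)*d) / (((k:ℝ)+2) * ((d:ℝ) * Real.log 2)))
            * (ENNReal.ofReal ((((2:ℝ)^k)⁻¹)^d) * v) := by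
          apply mul_le_mul_right
          rw [← hvcb _ (by positivity)]
          exact measure_mono Set.diff_subset
      _ = ENNReal.ofReal ((2:ℝ)^((k+2)*d) / (((k:ℝ)+2) * ((d:ℝ) * Real.log 2))
            * (((2:ℝ)^k)⁻¹)^d) * v := by
          rw [← mul_assoc, ← ENNReal.ofReal_mul (by positivity)]
      _ = ENNReal.ofReal ((4:ℝ)^d / ((d:ℝ) * Real.log 2) * (1/((k:ℝ)+2))) * v := by
          congr 2
          have h1 : (((2:ℝ)^k)⁻¹)^d = ((2:ℝ)^(k*d))⁻¹ := by
            rw [inv_pow, ← pow_mul]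
          have h2 : (2:ℝ)^((k+2)*d) = (2:ℝ)^(k*d) * (4:ℝ)^d := by
            have h4 : (4:ℝ)^d = (2:ℝ)^(2*d) := by
              rw [show (4:ℝ) = 2^2 by norm_num, ← pow_mul]
            rw [h4, ← pow_add]
            congr 1
            ring
          rw [h1, h2]
          have hp1 : (0:ℝ) < (2:ℝ)^(k*d) := by positivity
          have hp2 : (0:ℝ) < Real.log 2 := Real.log_pos one_lt_two
          have hp3 : (0:ℝ) < (k:ℝ)+2 := by positivity
          have hp4 : (0:ℝ) < (d:ℝ) := by positivity
          field_simp
  -- assemble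
  have hlogn : Real.log n ≤ 1 + L := by
    have h1 : (n:ℝ) ≤ 2 * Real.log (1/δ) := hnle
    have h2 : (0:ℝ) < n := by exact_mod_cast hn1
    calc Real.log n ≤ Real.log (2 * Real.log (1/δ)) := Real.log_le_log h2 h1
      _ = Real.log 2 + L := by
          rw [Real.log_mul (by norm_num) (by linarith), hLdef]
      _ ≤ 1 + L := by linarith [log_two_le_one]
  have hsumreal : ∑ k ∈ Finset.range m, (1:ℝ)/((k:ℝ)+2) ≤ 3 * L := by
    have h1 := sum_inv_le_log n hn1
    rw [hm, Finset.sum_range_succ'] at h1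
    have h2 : ∑ x ∈ Finset.range m, (1:ℝ)/((x:ℝ)+1+1)
        = ∑ k ∈ Finset.range m, (1:ℝ)/((k:ℝ)+2) :=
      Finset.sum_congr rfl (fun x _ => by push_cast; ring_nf)
    push_cast at h1
    rw [h2] at h1
    have h3 : (( (m:ℝ) + 1)) = (n:ℝ) := by rw [hm]; push_cast; ring
    norm_num at h1
    rw [h3] at h1
    have : ∑ k ∈ Finset.range m, (1:ℝ)/((k:ℝ)+2) ≤ Real.log n := by
      simp only [one_div]
      linarith
    calc ∑ k ∈ Finset.range m, (1:ℝ)/((k:ℝ)+2) ≤ Real.log n := this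
      _ ≤ 1 + L := hlogn
      _ ≤ 3 * L := by linarith
  calc (∫⁻ x in closedBall (0 : EuclideanSpace ℝ (Fin d)) 1,
        ENNReal.ofReal (PsiFun x ((HLMax (fDelta d δ) x).toReal)))
      ≤ ∫⁻ x in S₀ ∪ ⋃ k ∈ Finset.range m, T k,
          ENNReal.ofReal (PsiFun x ((HLMax (fDelta d δ) x).toReal)) :=
        lintegral_mono_set hcover
    _ ≤ (∫⁻ x in S₀, ENNReal.ofReal (PsiFun x ((HLMax (fDelta d δ) x).toReal)))
          + ∫⁻ x in ⋃ k ∈ Finset.range m, T k,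
              ENNReal.ofReal (PsiFun x ((HLMax (fDelta d δ) x).toReal)) :=
        lintegral_union_le _ _ _
    _ ≤ ENNReal.ofReal ((4:ℝ)^d) * v
          + ∑ k ∈ Finset.range m, ENNReal.ofReal ((4:ℝ)^d / ((d:ℝ) * Real.log 2)
              * (1/((k:ℝ)+2))) * v := by
        apply add_le_add hcentral
        exact (lintegral_biUnion_finset_le _ _ _).trans (Finset.sum_le_sum hann)
    _ ≤ ENNReal.ofReal (((volume (ball (0 : EuclideanSpace ℝ (Fin d)) 1)).toReal
          * ((4:ℝ)^d + 3 * (4:ℝ)^d / (d * Real.log 2))) * L) := by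
        have hp2 : (0:ℝ) < Real.log 2 := Real.log_pos one_lt_two
        have hnn2 : 0 ≤ ∑ k ∈ Finset.range m, (4:ℝ)^d / ((d:ℝ) * Real.log 2) * (1/((k:ℝ)+2)) := by
          apply Finset.sum_nonneg
          intro k _
          positivity
        have hstep : ∑ k ∈ Finset.range m, ENNReal.ofReal ((4:ℝ)^d / ((d:ℝ) * Real.log 2)
            * (1/((k:ℝ)+2))) * v
            = ENNReal.ofReal (∑ k ∈ Finset.range m, (4:ℝ)^d / ((d:ℝ) * Real.log 2)
                * (1/((k:ℝ)+2))) * v := by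
          rw [ENNReal.ofReal_sum_of_nonneg (fun k _ => by positivity), Finset.sum_mul]
        rw [hstep, ← add_mul, ← ENNReal.ofReal_add (by positivity) hnn2]
        calc ENNReal.ofReal ((4:ℝ)^d + ∑ k ∈ Finset.range m,
              (4:ℝ)^d / ((d:ℝ) * Real.log 2) * (1/((k:ℝ)+2))) * v
            = ENNReal.ofReal (((4:ℝ)^d + ∑ k ∈ Finset.range m,
                (4:ℝ)^d / ((d:ℝ) * Real.log 2) * (1/((k:ℝ)+2))) * v.toReal) := by
              rw [ENNReal.ofReal_mul (add_nonneg (by positivity) hnn2), ENNReal.ofReal_toReal hvne]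
          _ ≤ _ := by
              apply ENNReal.ofReal_le_ofReal
              have hsum2 : ∑ k ∈ Finset.range m, (4:ℝ)^d / ((d:ℝ) * Real.log 2) * (1/((k:ℝ)+2))
                  ≤ (4:ℝ)^d / ((d:ℝ) * Real.log 2) * (3 * L) := by
                rw [← Finset.mul_sum]
                apply mul_le_mul_of_nonneg_left hsumreal (by positivity)
              have h4d : (0:ℝ) < (4:ℝ)^d := by positivity
              have hkey : (4:ℝ)^d + ∑ k ∈ Finset.range m,
                  (4:ℝ)^d / ((d:ℝ) * Real.log 2) * (1/((k:ℝ)+2))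
                  ≤ ((4:ℝ)^d + 3 * (4:ℝ)^d / (d * Real.log 2)) * L := by
                have e1 : (4:ℝ)^d ≤ (4:ℝ)^d * L := by nlinarith
                calc (4:ℝ)^d + ∑ k ∈ Finset.range m,
                      (4:ℝ)^d / ((d:ℝ) * Real.log 2) * (1/((k:ℝ)+2))
                    ≤ (4:ℝ)^d * L + (4:ℝ)^d / ((d:ℝ) * Real.log 2) * (3 * L) :=
                      add_le_add e1 hsum2
                  _ = ((4:ℝ)^d + 3 * (4:ℝ)^d / (d * Real.log 2)) * L := by ring
              calc ((4:ℝ)^d + ∑ k ∈ Finset.range m,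
                    (4:ℝ)^d / ((d:ℝ) * Real.log 2) * (1/((k:ℝ)+2))) * v.toReal
                  ≤ (((4:ℝ)^d + 3 * (4:ℝ)^d / (d * Real.log 2)) * L) * v.toReal :=
                    mul_le_mul_of_nonneg_right hkey hvtnn
                _ = v.toReal * ((4:ℝ)^d + 3 * (4:ℝ)^d / (d * Real.log 2)) * L := by ring

lemma logPlus_value {d : ℕ} (hd : 0 < d) {δ : ℝ} (hδ : 0 < δ)
    (hδe : δ < Real.exp (-(Real.exp 1))) :
    logPlus (logPlus ((δ^d)⁻¹)) = Real.log d + Real.log (Real.log (1/δ)) := by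
  have hlog : Real.exp 1 < Real.log (1/δ) := log_inv_delta_gt hδ hδe
  have hlogpos : 0 < Real.log (1/δ) := lt_trans (Real.exp_pos 1) hlog
  have hL1 : 1 ≤ Real.log (Real.log (1/δ)) := loglog_ge_one hδ hδe
  have hd1 : (1:ℝ) ≤ d := by exact_mod_cast hd
  have hlogd : 0 ≤ Real.log d := Real.log_nonneg hd1
  have h1 : Real.log ((δ^d)⁻¹) = d * Real.log (1/δ) := by
    rw [Real.log_inv, Real.log_pow, one_div, Real.log_inv]
    push_cast
    ring
  unfold logPlus
  rw [h1, max_eq_left (mul_nonneg (by positivity) hlogpos.le),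
    Real.log_mul (by positivity) hlogpos.ne', max_eq_left (by linarith)]

end Aux

/-- **Sharpness example.** For `f_δ = δ^{-d} χ_{{|x|<δ}}`, both
`∫_{B₀} |f_δ| log⁺log⁺|f_δ|` and `∫_{B₀} Ψ(x, M(f_δ)(x)) dx` are comparable to
`log log (1/δ)`, uniformly in `δ ∈ (0, e^{-e})`. -/
theorem sharpness_example {d : ℕ} (hd : 0 < d) :
    ∃ c : ℝ, 0 < c ∧ ∃ C : ℝ, 0 < C ∧
      ∀ δ : ℝ, 0 < δ → δ < Real.exp (-(Real.exp 1)) →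
        (ENNReal.ofReal (c * Real.log (Real.log (1 / δ))) ≤
            (∫⁻ x in Metric.closedBall (0 : EuclideanSpace ℝ (Fin d)) 1,
              ENNReal.ofReal (‖fDelta d δ x‖ * logPlus (logPlus ‖fDelta d δ x‖))) ∧
          (∫⁻ x in Metric.closedBall (0 : EuclideanSpace ℝ (Fin d)) 1,
              ENNReal.ofReal (‖fDelta d δ x‖ * logPlus (logPlus ‖fDelta d δ x‖))) ≤
            ENNReal.ofReal (C * Real.log (Real.log (1 / δ)))) ∧
        (ENNReal.ofReal (c * Real.log (Real.log (1 / δ))) ≤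
            (∫⁻ x in Metric.closedBall (0 : EuclideanSpace ℝ (Fin d)) 1,
              ENNReal.ofReal (PsiFun x ((HLMax (fDelta d δ) x).toReal))) ∧
          (∫⁻ x in Metric.closedBall (0 : EuclideanSpace ℝ (Fin d)) 1,
              ENNReal.ofReal (PsiFun x ((HLMax (fDelta d δ) x).toReal))) ≤
            ENNReal.ofReal (C * Real.log (Real.log (1 / δ)))) := by
  haveI : Nonempty (Fin d) := ⟨⟨0, hd⟩⟩
  set vR := (volume (ball (0 : EuclideanSpace ℝ (Fin d)) 1)).toReal with hvRdef
  have hvne : volume (ball (0 : EuclideanSpace ℝ (Fin d)) 1) ≠ ⊤ := measure_ball_lt_top.ne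
  have hvpos : 0 < vR :=
    ENNReal.toReal_pos (measure_ball_pos volume 0 one_pos).ne' hvne
  have hveq : volume (ball (0 : EuclideanSpace ℝ (Fin d)) 1) = ENNReal.ofReal vR :=
    (ENNReal.ofReal_toReal hvne).symm
  set A₁ : ℝ := Real.log (Real.exp 1 + 1) with hA₁def
  have hA₁1 : 1 ≤ A₁ := one_le_log_exp_add one_pos.le
  have hd1 : (1:ℝ) ≤ d := by exact_mod_cast hd
  have hlog2 : 0 < Real.log 2 := Real.log_pos one_lt_two
  have hlogd : 0 ≤ Real.log d := Real.log_nonneg hd1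
  set cB : ℝ := vR * (((2:ℝ)^d)⁻¹ / (2 * (2 * A₁ + d)) / 4) with hcBdef
  have hcB : 0 < cB := by positivity
  set CA : ℝ := vR * (Real.log d + 1) with hCAdef
  have hCA : 0 < CA := by positivity
  set CB : ℝ := vR * ((4:ℝ)^d + 3 * (4:ℝ)^d / (d * Real.log 2)) with hCBdef
  have hCB : 0 < CB := by positivity
  refine ⟨min vR cB, lt_min hvpos hcB, max CA CB, lt_max_of_lt_left hCA, ?_⟩
  intro δ hδ hδe
  have hδ1 : δ < 1 := hδe.trans (Real.exp_lt_one_iff.mpr (by linarith [Real.exp_pos 1]))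
  set L : ℝ := Real.log (Real.log (1/δ)) with hLdef
  have hL1 : 1 ≤ L := loglog_ge_one hδ hδe
  have hminle : min vR cB ≤ vR := min_le_left _ _
  have hminle2 : min vR cB ≤ cB := min_le_right _ _
  refine ⟨⟨?_, ?_⟩, ?_, ?_⟩
  · rw [partA hd hδ hδ1, logPlus_value hd hδ hδe, hveq,
      ← ENNReal.ofReal_mul (by linarith)]
    apply ENNReal.ofReal_le_ofReal
    nlinarith [mul_le_mul_of_nonneg_right hminle (show (0:ℝ) ≤ L by linarith),
      mul_nonneg hvpos.le hlogd]
  · rw [partA hd hδ hδ1, logPlus_value hd hδ hδe, hveq,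
      ← ENNReal.ofReal_mul (by linarith)]
    apply ENNReal.ofReal_le_ofReal
    have h1 : (Real.log d + L) * vR ≤ CA * L := by
      rw [hCAdef]
      nlinarith [mul_nonneg (mul_nonneg hvpos.le hlogd) (sub_nonneg.mpr hL1)]
    have h2 : CA ≤ max CA CB := le_max_left _ _
    nlinarith
  · refine le_trans ?_ (partB_lower hd hδ hδe)
    apply ENNReal.ofReal_le_ofReal
    have : min vR cB * L ≤ cB * L := mul_le_mul_of_nonneg_right hminle2 (by linarith)
    rw [hcBdef] at this
    linarith
  · refine (partB_upper hd hδ hδe).trans ?_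
    apply ENNReal.ofReal_le_ofReal
    have h2 : CB ≤ max CA CB := le_max_right _ _
    have h3 : vR * ((4:ℝ)^d + 3 * (4:ℝ)^d / (d * Real.log 2)) * L ≤ CB * L := by
      rw [hCBdef]
    nlinarith
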